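/- arXiv:1606.04228 — 2 statements merged into one kernel-verified Lean document; each statement's English description precedes it below -/
import Mathlib

section
/- For a supercritical BPRE with p₀(ξ₀) = 0 a.s. and ℙ(Z₁ = 1 | Z₀ = 1) > 0, fix k ≥ 1, let r_k solve γ_k = 𝔼[m₀^{−r_k}] and assume 𝔼[m₀^{r_k + ε}] < ∞ for some ε > 0. Then for every t ∈ [0, 1) the sequence G_{k,n}(t)/γ_k^n is nondecreasing in n and converges to Q_k(t) = Σ_{j=k}^∞ q_{k,j} t^j, where G_{k,n}(t) = 𝔼_k[t^{Zₙ}] is the probability generating function of Zₙ when Z₀ = k. -/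
open MeasureTheory ProbabilityTheory Filter
open scoped ENNReal Topology ProbabilityTheory

noncomputable section

/-- `convPow p i e j` is the probability that a sum of `i` i.i.d. random variables,
each distributed according to the offspring law `p · e`, equals `j`;
i.e. the `i`-fold convolution of the offspring law determined by the environment
value `e`.  Thus `convPow p i e` is the quenched one-step transition law of a
branching process from state `i` under the environment value `e`. -/
def convPow {E : Type*} (p : ℕ → E → ℝ) : ℕ → E → ℕ → ℝ
  | 0, _, j => if j = 0 then 1 else 0
  | i + 1, e, j => ∑ l ∈ Finset.range (j + 1), convPow p i e l * p (j - l) e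

/-- The canonical filtration on the trajectory space `ℕ → ℕ`:
`trajFiltration n` is the σ-algebra generated by the coordinates `0, …, n`. -/
def trajFiltration (n : ℕ) : MeasurableSpace (ℕ → ℕ) :=
  ⨆ i ∈ Finset.range (n + 1), MeasurableSpace.comap (fun z : ℕ → ℕ => z i) ⊤

/-- A branching process in an i.i.d. random environment (BPRE).
The environment is a sequence of i.i.d. random variables with values in `E`
(its law is the measure `μenv` on the sequence space), each value `e : E`
determining an offspring law `p · e` (i.e. a generating function
`f(e, t) = ∑ pᵢ(e) tⁱ`).  `K k` is the quenched law of the whole trajectory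
`(Z_n)_{n ≥ 0}` of the branching process starting from `Z_0 = k`, given the
environment sequence: under `K k e`, `(Z_n)` starts at `k` and its one-step
conditional transition laws are the convolution powers `convPow p (Z_n) (e n)`
of the offspring laws — which is exactly the law of the process
`Z_{n+1} = ∑_{i=1}^{Z_n} N_{n,i}` where, conditionally on the environment, the
`N_{n,i}` (i ≥ 1) are i.i.d. with generating function `f(e n, ·)` and
independent of `Z_n`. -/
structure BPRE (E : Type*) [MeasurableSpace E] where
  /-- the offspring distributions determined by an environment value -/
  p : ℕ → E → ℝ
  p_meas : ∀ i, Measurable (p i)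
  p_nonneg : ∀ i e, 0 ≤ p i e
  p_tsum : ∀ e, ∑' i, p i e = 1
  /-- quenched law of the trajectory of `(Z_n)` with `Z_0 = k`, given the environment -/
  K : ℕ → Kernel (ℕ → E) (ℕ → ℕ)
  K_markov : ∀ k, IsMarkovKernel (K k)
  K_zero : ∀ k e, K k e {z | z 0 = k} = 1
  K_step : ∀ k e n j (A : Set (ℕ → ℕ)), MeasurableSet[trajFiltration n] A →
    K k e ({z | z (n + 1) = j} ∩ A)
      = ∫⁻ z in A, ENNReal.ofReal (convPow p (z n) (e n) j) ∂(K k e)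
  /-- the law of the i.i.d. environment sequence `ξ = (ξ₀, ξ₁, …)` -/
  μenv : Measure (ℕ → E)
  μenv_prob : IsProbabilityMeasure μenv
  μenv_iid : iIndepFun (fun n (e : ℕ → E) => e n) μenv
  μenv_ident : ∀ n, Measure.map (fun e : ℕ → E => e n) μenv
      = Measure.map (fun e : ℕ → E => e 0) μenv

namespace BPRE

variable {E : Type*} [MeasurableSpace E] (b : BPRE E)

/-- The law `ν` (that of `ξ₀`) of one environment component. -/
def ν : Measure E := b.μenv.map fun e => e 0

/-- `m e` : the mean number of offspring `m₀ = ∑ i pᵢ(e)` of one individual under the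
environment value `e`. -/
def m (e : E) : ℝ := ∑' i : ℕ, (i : ℝ) * b.p i e

/-- `Π_n = m₀ ⋯ m_{n-1}` along the environment sequence `e`. -/
def PiEnv (n : ℕ) (e : ℕ → E) : ℝ := ∏ j ∈ Finset.range n, b.m (e j)

/-- The annealed law `ℙ_k` of the pair (environment, trajectory) when `Z_0 = k`. -/
def P (k : ℕ) : Measure ((ℕ → E) × (ℕ → ℕ)) :=
  haveI := b.μenv_prob
  haveI := b.K_markov k
  Measure.compProd b.μenv (b.K k)

/-- The annealed probability `ℙ_k (Z_n = j)`. -/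
def probZ (k n j : ℕ) : ℝ := (b.P k {ω | ω.2 n = j}).toReal

/-- `γ_k = ℙ_k(Z_1 = k) = 𝔼[p₁(ξ₀)^k]`. -/
def γ (k : ℕ) : ℝ := ∫ e, b.p 1 (e 0) ^ k ∂b.μenv

/-- The normalized population limit `W = lim_n Z_n / Π_n` (defined via `limsup`, which
agrees a.s. with the limit of the nonnegative martingale `W_n = Z_n / Π_n`). -/
def W (ω : (ℕ → E) × (ℕ → ℕ)) : ℝ :=
  limsup (fun n => (ω.2 n : ℝ) / b.PiEnv n ω.1) atTop

/-- The quenched limit variable `W` under a fixed environment sequence `e`. -/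
def Wq (e : ℕ → E) (z : ℕ → ℕ) : ℝ :=
  limsup (fun n => (z n : ℝ) / b.PiEnv n e) atTop

/-- The quenched Laplace transform `φ_ξ(t) = 𝔼_ξ[e^{-tW}]` (with `Z_0 = 1`). -/
def phiq (e : ℕ → E) (t : ℝ) : ℝ := ∫ z, Real.exp (-t * b.Wq e z) ∂(b.K 1 e)

/-- The annealed Laplace transform `φ_k(t) = 𝔼_k[e^{-tW}]` (with `Z_0 = k`). -/
def phi (k : ℕ) (t : ℝ) : ℝ := ∫ ω, Real.exp (-t * b.W ω) ∂(b.P k)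

/-- Standing assumptions: the process is supercritical (`𝔼 log m₀ ∈ (0,∞)`) and each
individual gives birth to at least one child (`p₀(ξ₀) = 0` a.s.). -/
def Standing : Prop :=
  Integrable (fun e : ℕ → E => Real.log (b.m (e 0))) b.μenv ∧
  (0 < ∫ e, Real.log (b.m (e 0)) ∂b.μenv) ∧
  (∀ᵐ e ∂b.μenv, b.p 0 (e 0) = 0)

/-- The moment assumption `𝔼[(Z₁/m₀) log⁺ Z₁] < ∞`, which ensures `W_n → W` in
`L¹(ℙ)` and `ℙ(W > 0) = 1`. -/
def ZlogZ : Prop :=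
  Integrable (fun ω : (ℕ → E) × (ℕ → ℕ) =>
    ((ω.2 1 : ℝ) / b.m (ω.1 0)) * Real.log (max ((ω.2 1 : ℝ)) 1)) (b.P 1)

end BPRE


section PointwiseAux

variable {E : Type*} {p : ℕ → E → ℝ}

lemma convPow_nonneg (hp : ∀ i e, 0 ≤ p i e) : ∀ i e j, 0 ≤ convPow p i e j := by
  intro i
  induction i with
  | zero => intro e j; simp only [convPow]; split <;> norm_num
  | succ i ih =>
    intro e j
    exact Finset.sum_nonneg fun l _ => mul_nonneg (ih e l) (hp _ e)

lemma convPow_meas [MeasurableSpace E] (hp : ∀ i, Measurable (p i)) (i j : ℕ) :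
    Measurable (fun e => convPow p i e j) := by
  induction i generalizing j with
  | zero => simp only [convPow]; exact measurable_const
  | succ i ih =>
    simp only [convPow]
    exact Finset.measurable_sum _ fun l _ => (ih l).mul (hp (j - l))

lemma convPow_ge_pow (hp : ∀ i e, 0 ≤ p i e) (i : ℕ) (e : E) :
    p 1 e ^ i ≤ convPow p i e i := by
  induction i with
  | zero => simp [convPow]
  | succ i ih =>
    have h1 : convPow p i e i * p 1 e ≤ ∑ l ∈ Finset.range (i + 1 + 1), convPow p i e l * p (i + 1 - l) e := by
      have : i ∈ Finset.range (i + 1 + 1) := by simp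
      have := Finset.single_le_sum (f := fun l => convPow p i e l * p (i + 1 - l) e)
        (fun l _ => mul_nonneg (convPow_nonneg hp i e l) (hp _ e)) this
      simpa using this
    calc p 1 e ^ (i + 1) = p 1 e ^ i * p 1 e := by ring
      _ ≤ convPow p i e i * p 1 e := by
          exact mul_le_mul_of_nonneg_right ih (hp 1 e)
      _ ≤ _ := h1
    -- unfolding convPow
  
lemma convPow_eq_zero (hp0 : p 0 e = 0) (hp : ∀ i e, 0 ≤ p i e) :
    ∀ i j, j < i → convPow p i e j = 0 := by
  intro i
  induction i with
  | zero => omega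
  | succ i ih =>
    intro j hj
    simp only [convPow]
    refine Finset.sum_eq_zero fun l hl => ?_
    rcases lt_or_ge l i with h | h
    · rw [ih l h, zero_mul]
    · have : l = i ∧ j = i := by simp at hl; omega
      -- j < i+1 so j ≤ i, l ≤ j ≤ i, l ≥ i means l = i = j
      rw [this.1, this.2]
      simp [hp0]

end PointwiseAux

section ENNAux

open ENNReal

lemma sum_range_eq_tsum_pairs (F : ℕ → ℕ → ℝ≥0∞) (j : ℕ) :
    ∑ l ∈ Finset.range (j + 1), F l (j - l)
      = ∑' x : ℕ × ℕ, if x.1 + x.2 = j then F x.1 x.2 else 0 := by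
  rw [tsum_eq_sum (s := (Finset.range (j + 1)).image fun l => (l, j - l))
    (by
      intro x hx
      rw [if_neg]
      intro hsum
      exact hx (Finset.mem_image.mpr ⟨x.1, Finset.mem_range.mpr (by omega),
        by rw [Prod.ext_iff]; constructor <;> simp <;> omega⟩))]
  rw [Finset.sum_image (by intro a _ b _ h; exact (Prod.ext_iff.mp h).1)]
  refine Finset.sum_congr rfl fun l hl => ?_
  have : l ≤ j := Nat.lt_succ_iff.mp (Finset.mem_range.mp hl)
  rw [if_pos (by omega)]

lemma tsum_conv (F : ℕ → ℕ → ℝ≥0∞) :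
    ∑' j, ∑ l ∈ Finset.range (j + 1), F l (j - l) = ∑' x : ℕ × ℕ, F x.1 x.2 := by
  calc ∑' j, ∑ l ∈ Finset.range (j + 1), F l (j - l)
      = ∑' j, ∑' x : ℕ × ℕ, if x.1 + x.2 = j then F x.1 x.2 else 0 :=
        tsum_congr fun j => sum_range_eq_tsum_pairs F j
    _ = ∑' x : ℕ × ℕ, ∑' j, if x.1 + x.2 = j then F x.1 x.2 else 0 := ENNReal.tsum_comm
    _ = ∑' x : ℕ × ℕ, F x.1 x.2 := by
        refine tsum_congr fun x => ?_
        simp_rw [eq_comm (a := x.1 + x.2)]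
        exact tsum_ite_eq (x.1 + x.2) (fun _ => F x.1 x.2)

variable {E : Type*} {p : ℕ → E → ℝ}

lemma convPGF (hp : ∀ i e, 0 ≤ p i e) (i : ℕ) (e : E) (s : ℝ≥0∞) :
    ∑' j, ENNReal.ofReal (convPow p i e j) * s ^ j
      = (∑' d, ENNReal.ofReal (p d e) * s ^ d) ^ i := by
  induction i with
  | zero =>
    rw [pow_zero, tsum_eq_single 0 (by intro j hj; simp [convPow, hj])]
    simp [convPow]
  | succ i ih =>
    have hterm : ∀ j, ENNReal.ofReal (convPow p (i + 1) e j) * s ^ j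
        = ∑ l ∈ Finset.range (j + 1),
            (ENNReal.ofReal (convPow p i e l) * s ^ l)
              * (ENNReal.ofReal (p (j - l) e) * s ^ (j - l)) := by
      intro j
      rw [show convPow p (i + 1) e j
          = ∑ l ∈ Finset.range (j + 1), convPow p i e l * p (j - l) e from rfl,
        ENNReal.ofReal_sum_of_nonneg
          (fun l _ => mul_nonneg (convPow_nonneg hp i e l) (hp _ e)), Finset.sum_mul]
      refine Finset.sum_congr rfl fun l hl => ?_
      have hlj : l ≤ j := Nat.lt_succ_iff.mp (Finset.mem_range.mp hl)
      rw [ENNReal.ofReal_mul (convPow_nonneg hp i e l),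
        show s ^ j = s ^ l * s ^ (j - l) by rw [← pow_add]; congr 1; omega]
      ring
    calc ∑' j, ENNReal.ofReal (convPow p (i + 1) e j) * s ^ j
        = ∑' x : ℕ × ℕ, (ENNReal.ofReal (convPow p i e x.1) * s ^ x.1)
            * (ENNReal.ofReal (p x.2 e) * s ^ x.2) := by
          rw [tsum_congr hterm]
          exact tsum_conv (fun a bb =>
            ENNReal.ofReal (convPow p i e a) * s ^ a * (ENNReal.ofReal (p bb e) * s ^ bb))
      _ = (∑' a, ENNReal.ofReal (convPow p i e a) * s ^ a)
            * (∑' d, ENNReal.ofReal (p d e) * s ^ d) := by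
          rw [ENNReal.tsum_prod (f := fun a bb =>
            ENNReal.ofReal (convPow p i e a) * s ^ a * (ENNReal.ofReal (p bb e) * s ^ bb))]
          simp_rw [ENNReal.tsum_mul_left, ENNReal.tsum_mul_right]
      _ = _ := by rw [ih, pow_succ]

lemma p_summable (hp : ∀ i e, 0 ≤ p i e) (htsum : ∀ e, ∑' i, p i e = 1) (e : E) :
    Summable fun i => p i e := by
  by_contra h
  have h1 := htsum e
  rw [tsum_eq_zero_of_not_summable h] at h1
  norm_num at h1

lemma p_le_one (hp : ∀ i e, 0 ≤ p i e) (htsum : ∀ e, ∑' i, p i e = 1) (i : ℕ) (e : E) :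
    p i e ≤ 1 := by
  rw [← htsum e]
  exact Summable.le_tsum (p_summable hp htsum e) i fun j _ => hp j e

lemma tsum_ofReal_p (hp : ∀ i e, 0 ≤ p i e) (htsum : ∀ e, ∑' i, p i e = 1) (e : E) :
    ∑' d, ENNReal.ofReal (p d e) = 1 := by
  rw [← ENNReal.ofReal_tsum_of_nonneg (fun d => hp d e) (p_summable hp htsum e), htsum e,
    ENNReal.ofReal_one]

lemma fq_le (hp : ∀ i e, 0 ≤ p i e) (htsum : ∀ e, ∑' i, p i e = 1) {e : E}
    (hp0 : p 0 e = 0) {t : ℝ} (ht0 : 0 ≤ t) (ht1 : t ≤ 1) :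
    ∑' d, ENNReal.ofReal (p d e) * ENNReal.ofReal t ^ d
      ≤ ENNReal.ofReal t * ENNReal.ofReal (p 1 e + (1 - p 1 e) * t) := by
  set s : ℝ≥0∞ := ENNReal.ofReal t with hs
  have hs1 : s ≤ 1 := ENNReal.ofReal_le_one.mpr ht1
  have h1le : p 1 e ≤ 1 := p_le_one hp htsum 1 e
  -- tail sum
  have htail : ∑' d, ENNReal.ofReal (p (d + 2) e) = ENNReal.ofReal (1 - p 1 e) := by
    have hsumm : Summable fun d => p (d + 2) e := (summable_nat_add_iff 2).mpr (p_summable hp htsum e)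
    rw [← ENNReal.ofReal_tsum_of_nonneg (fun d => hp _ e) hsumm]
    congr 1
    have := Summable.sum_add_tsum_nat_add 2 (p_summable hp htsum e)
    rw [htsum e] at this
    have h2 : ∑ i ∈ Finset.range 2, p i e = p 1 e := by
      simp [Finset.sum_range_succ, hp0]
    linarith
  have hsplit : ∑' d, ENNReal.ofReal (p d e) * s ^ d
      = ENNReal.ofReal (p 1 e) * s + ∑' d, ENNReal.ofReal (p (d + 2) e) * s ^ (d + 2) := by
    rw [(Summable.sum_add_tsum_nat_add' (f := fun d => ENNReal.ofReal (p d e) * s ^ d) (k := 2)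
      ENNReal.summable).symm]
    simp [Finset.sum_range_succ, hp0]
  rw [hsplit]
  have hRHS : ENNReal.ofReal t * ENNReal.ofReal (p 1 e + (1 - p 1 e) * t)
      = ENNReal.ofReal (p 1 e) * s + s ^ 2 * ENNReal.ofReal (1 - p 1 e) := by
    rw [ENNReal.ofReal_add (hp 1 e) (mul_nonneg (by linarith) ht0),
      ENNReal.ofReal_mul (by linarith)]
    ring
  rw [hRHS]
  gcongr
  calc ∑' d, ENNReal.ofReal (p (d + 2) e) * s ^ (d + 2)
      ≤ ∑' d, ENNReal.ofReal (p (d + 2) e) * s ^ 2 := by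
        refine ENNReal.tsum_le_tsum fun d => ?_
        rw [show d + 2 = 2 + d by omega, pow_add]
        exact mul_le_mul_right (mul_le_of_le_one_right zero_le (pow_le_one' hs1 d)) _
    _ = s ^ 2 * ENNReal.ofReal (1 - p 1 e) := by
        rw [ENNReal.tsum_mul_right, htail]; ring

end ENNAux

section Backbone

/-- cylinder set on coordinates `0,…,n` -/
def Cyl (n : ℕ) (w : ℕ → ℕ) : Set (ℕ → ℕ) := {z | ∀ i ≤ n, z i = w i}

lemma measurableSet_cyl (n : ℕ) (w : ℕ → ℕ) : MeasurableSet (Cyl n w) := by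
  have : Cyl n w = ⋂ i ∈ Set.Iic n, (fun z : ℕ → ℕ => z i) ⁻¹' {w i} := by
    ext z; simp [Cyl, Set.mem_iInter]
  rw [this]
  exact MeasurableSet.biInter (Set.to_countable _)
    fun i _ => (measurable_pi_apply i) (MeasurableSet.singleton (w i))

lemma trajFiltration_le (n : ℕ) :
    trajFiltration n ≤ (inferInstance : MeasurableSpace (ℕ → ℕ)) := by
  refine iSup_le fun i => iSup_le fun _ => ?_
  exact measurable_iff_comap_le.mp (measurable_pi_apply i)

lemma measurableSet_cyl_filt (n : ℕ) (w : ℕ → ℕ) :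
    MeasurableSet[trajFiltration n] (Cyl n w) := by
  have : Cyl n w = ⋂ i ∈ Finset.range (n + 1), (fun z : ℕ → ℕ => z i) ⁻¹' {w i} := by
    ext z; simp [Cyl, Set.mem_iInter, Nat.lt_succ_iff]
  rw [this]
  refine MeasurableSet.biInter (Set.to_countable _) fun i hi => ?_
  have hle : MeasurableSpace.comap (fun z : ℕ → ℕ => z i) ⊤ ≤ trajFiltration n :=
    le_iSup₂ (f := fun i _ => MeasurableSpace.comap (fun z : ℕ → ℕ => z i) ⊤) i hi
  exact hle _ ⟨{w i}, trivial, rfl⟩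

lemma measurableSet_slice (n j : ℕ) : MeasurableSet {z : ℕ → ℕ | z n = j} := by
  have : {z : ℕ → ℕ | z n = j} = (fun z : ℕ → ℕ => z n) ⁻¹' {j} := rfl
  rw [this]
  exact measurable_pi_apply n (MeasurableSet.singleton j)

/-- extension of a finite path by terminal value `j` -/
def pathExt (j n : ℕ) (v : Fin n → ℕ) : ℕ → ℕ := fun i => if h : i < n then v ⟨i, h⟩ else j

lemma slice_eq_iUnion (n j : ℕ) :
    {z : ℕ → ℕ | z n = j} = ⋃ v : Fin n → ℕ, Cyl n (pathExt j n v) := by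
  ext z
  simp only [Set.mem_setOf_eq, Set.mem_iUnion]
  constructor
  · intro hz
    refine ⟨fun l => z l, fun i hi => ?_⟩
    unfold pathExt
    rcases lt_or_ge i n with h | h
    · simp [h]
    · have : i = n := by omega
      simp [this, hz]
  · intro ⟨v, hv⟩
    have := hv n le_rfl
    simpa [pathExt] using this

lemma disjoint_cyl (n j : ℕ) :
    Pairwise (Function.onFun Disjoint fun v : Fin n → ℕ => Cyl n (pathExt j n v)) := by
  intro v v' hvv'
  rw [Function.onFun, Set.disjoint_left]
  intro z hz hz'
  apply hvv'
  funext l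
  have h1 := hz l.1 (le_of_lt l.2)
  have h2 := hz' l.1 (le_of_lt l.2)
  rw [h1] at h2
  simpa [pathExt, l.2] using h2

/-- σ-algebra generated by environment coordinates `< n` -/
def MenvE (E : Type*) [MeasurableSpace E] (n : ℕ) : MeasurableSpace (ℕ → E) :=
  ⨆ l ∈ Set.Iio n, MeasurableSpace.comap (fun e : ℕ → E => e l) inferInstance

lemma MenvE_le (E : Type*) [MeasurableSpace E] (n : ℕ) :
    MenvE E n ≤ (inferInstance : MeasurableSpace (ℕ → E)) := by
  refine iSup_le fun l => iSup_le fun _ => ?_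
  exact measurable_iff_comap_le.mp (measurable_pi_apply l)

namespace BPRE

variable {E : Type*} [MeasurableSpace E] (b : BPRE E)

/-- annealed one-step transition "matrix" -/
def TE (i j : ℕ) : ℝ≥0∞ := ∫⁻ e, ENNReal.ofReal (convPow b.p i (e 0) j) ∂b.μenv

end BPRE

/-- annealed n-step transition "matrix" -/
def BPRE.AE {E : Type*} [MeasurableSpace E] (b : BPRE E) : ℕ → ℕ → ℕ → ℝ≥0∞
  | 0, i, j => if j = i then 1 else 0
  | n + 1, i, j => ∑' l, b.TE i l * BPRE.AE b n l j

namespace BPRE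

variable {E : Type*} [MeasurableSpace E] (b : BPRE E)

lemma K_cyl (k n : ℕ) (w : ℕ → ℕ) (e : ℕ → E) :
    b.K k e (Cyl n w) = (if w 0 = k then 1 else 0)
      * ∏ l ∈ Finset.range n, ENNReal.ofReal (convPow b.p (w l) (e l) (w (l + 1))) := by
  haveI := b.K_markov k
  induction n with
  | zero =>
    have hc : Cyl 0 w = {z | z 0 = w 0} := by
      ext z; simp [Cyl, Nat.le_zero]
    rw [hc]
    by_cases hw : w 0 = k
    · rw [hw, if_pos rfl]
      simpa using b.K_zero k e
    · rw [if_neg hw]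
      simp only [Finset.range_zero, Finset.prod_empty, zero_mul]
      have hsub : {z : ℕ → ℕ | z 0 = w 0} ⊆ {z : ℕ → ℕ | z 0 = k}ᶜ := by
        intro z hz hz'
        exact hw (hz ▸ hz')
      have hveq : b.K k e {z : ℕ → ℕ | z 0 = k}ᶜ = 0 := by
        have hms : MeasurableSet {z : ℕ → ℕ | z 0 = k} := measurableSet_slice 0 k
        rw [measure_compl hms (measure_ne_top _ _), b.K_zero k e, measure_univ]
        simp
      exact le_antisymm (le_trans (measure_mono hsub) hveq.le) zero_le
  | succ n ih =>
    have hc : Cyl (n + 1) w = {z | z (n + 1) = w (n + 1)} ∩ Cyl n w := by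
      ext z
      simp only [Cyl, Set.mem_setOf_eq, Set.mem_inter_iff]
      constructor
      · intro h; exact ⟨h (n + 1) le_rfl, fun i hi => h i (le_trans hi (Nat.le_succ n))⟩
      · intro ⟨h1, h2⟩ i hi
        rcases Nat.eq_or_lt_of_le hi with h | h
        · rw [h]; exact h1
        · exact h2 i (Nat.lt_succ_iff.mp h)
    rw [hc, b.K_step k e n (w (n + 1)) (Cyl n w) (measurableSet_cyl_filt n w)]
    have hcongr : ∫⁻ z in Cyl n w, ENNReal.ofReal (convPow b.p (z n) (e n) (w (n + 1))) ∂(b.K k e)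
        = ∫⁻ _ in Cyl n w, ENNReal.ofReal (convPow b.p (w n) (e n) (w (n + 1))) ∂(b.K k e) := by
      refine setLIntegral_congr_fun (measurableSet_cyl n w) ?_
      intro z hz
      simp only [hz n le_rfl]
    rw [hcongr, setLIntegral_const, ih, Finset.prod_range_succ]
    ring

lemma K_slice (k n j : ℕ) (e : ℕ → E) :
    b.K k e {z | z n = j} = ∑' v : Fin n → ℕ, b.K k e (Cyl n (pathExt j n v)) := by
  rw [slice_eq_iUnion n j, measure_iUnion (disjoint_cyl n j) fun v => measurableSet_cyl _ _]

lemma K_slice_meas (k n j : ℕ) :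
    Measurable[MenvE E n] fun e : ℕ → E => b.K k e {z | z n = j} := by
  have hrepr : (fun e : ℕ → E => b.K k e {z | z n = j})
      = fun e => ∑' v : Fin n → ℕ, ((if pathExt j n v 0 = k then 1 else 0)
        * ∏ l ∈ Finset.range n,
            ENNReal.ofReal (convPow b.p (pathExt j n v l) (e l) (pathExt j n v (l + 1)))) := by
    funext e
    rw [K_slice]
    exact tsum_congr fun v => b.K_cyl k n (pathExt j n v) e
  rw [hrepr]
  refine Measurable.ennreal_tsum fun v => ?_
  refine Measurable.const_mul ?_ _
  refine Finset.measurable_prod _ fun l hl => ?_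
  have hl' : l < n := Finset.mem_range.mp hl
  have hev : Measurable[MenvE E n] fun e : ℕ → E => e l := by
    have hle : MeasurableSpace.comap (fun e : ℕ → E => e l) inferInstance ≤ MenvE E n :=
      le_iSup₂ (f := fun (l' : ℕ) (_ : l' ∈ Set.Iio n) =>
        MeasurableSpace.comap (fun e : ℕ → E => e l') inferInstance) l hl'
    exact fun s hs => hle _ ⟨s, hs, rfl⟩
  exact (ENNReal.measurable_ofReal.comp
    ((convPow_meas b.p_meas (pathExt j n v l) (pathExt j n v (l + 1))))).comp hev

lemma P_prob (k : ℕ) : IsProbabilityMeasure (b.P k) := by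
  haveI := b.μenv_prob
  haveI := b.K_markov k
  constructor
  unfold P
  rw [Measure.compProd_apply MeasurableSet.univ]
  simp

lemma P_slice (k n j : ℕ) :
    b.P k {ω | ω.2 n = j} = ∫⁻ e, b.K k e {z | z n = j} ∂b.μenv := by
  haveI := b.μenv_prob
  haveI := b.K_markov k
  unfold P
  rw [Measure.compProd_apply]
  · rfl
  · have : {ω : (ℕ → E) × (ℕ → ℕ) | ω.2 n = j}
        = (fun ω : (ℕ → E) × (ℕ → ℕ) => ω.2 n) ⁻¹' {j} := rfl
    rw [this]
    exact ((measurable_pi_apply n).comp measurable_snd) (MeasurableSet.singleton j)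

end BPRE

lemma lintegral_eval {Ω : Type*} [MeasurableSpace Ω] (μ : Measure Ω) (h : Ω → ℕ)
    (hm : Measurable h) (f : ℕ → ℝ≥0∞) :
    ∫⁻ ω, f (h ω) ∂μ = ∑' i, f i * μ (h ⁻¹' {i}) := by
  have hpt : ∀ ω, f (h ω) = ∑' i, Set.indicator (h ⁻¹' {i}) (fun _ => f i) ω := by
    intro ω
    rw [tsum_eq_single (h ω)]
    · simp [Set.indicator_of_mem, Set.mem_preimage]
    · intro i hi
      apply Set.indicator_of_notMem
      simp only [Set.mem_preimage, Set.mem_singleton_iff]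
      exact fun hc => hi hc.symm
  calc ∫⁻ ω, f (h ω) ∂μ = ∫⁻ ω, ∑' i, Set.indicator (h ⁻¹' {i}) (fun _ => f i) ω ∂μ :=
        lintegral_congr hpt
    _ = ∑' i, ∫⁻ ω, Set.indicator (h ⁻¹' {i}) (fun _ => f i) ω ∂μ :=
        lintegral_tsum fun i =>
          (measurable_const.indicator (hm (MeasurableSet.singleton i))).aemeasurable
    _ = ∑' i, f i * μ (h ⁻¹' {i}) := by
        refine tsum_congr fun i => ?_
        rw [lintegral_indicator_const (hm (MeasurableSet.singleton i))]

end Backbone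

section Backbone2

namespace BPRE

variable {E : Type*} [MeasurableSpace E] (b : BPRE E)

lemma K_slice_zero (k j : ℕ) (e : ℕ → E) (hj : j ≠ k) :
    b.K k e {z | z 0 = j} = 0 := by
  haveI := b.K_markov k
  have hsub : {z : ℕ → ℕ | z 0 = j} ⊆ {z : ℕ → ℕ | z 0 = k}ᶜ :=
    fun z hz hz' => hj (hz.symm.trans hz')
  have hveq : b.K k e {z : ℕ → ℕ | z 0 = k}ᶜ = 0 := by
    rw [measure_compl (measurableSet_slice 0 k) (measure_ne_top _ _), b.K_zero k e, measure_univ]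
    simp
  exact le_antisymm ((measure_mono hsub).trans hveq.le) zero_le

lemma P_zero (k j : ℕ) : b.P k {ω | ω.2 0 = j} = if j = k then 1 else 0 := by
  haveI := b.μenv_prob
  rw [P_slice]
  by_cases hj : j = k
  · subst hj
    rw [if_pos rfl, lintegral_congr fun e => b.K_zero j e, lintegral_one, measure_univ]
  · rw [if_neg hj, lintegral_congr fun e => b.K_slice_zero k j e hj, lintegral_zero]

lemma lint_comp_eval (g : E → ℝ≥0∞) (hg : Measurable g) (n : ℕ) :
    ∫⁻ e, g (e n) ∂b.μenv = ∫⁻ e, g (e 0) ∂b.μenv := by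
  rw [← lintegral_map hg (measurable_pi_apply n), b.μenv_ident n,
    lintegral_map hg (measurable_pi_apply 0)]

lemma indep_eval_MenvE (n : ℕ) :
    ProbabilityTheory.Indep
      (MeasurableSpace.comap (fun e : ℕ → E => e n) inferInstance) (MenvE E n) b.μenv := by
  have hii := b.μenv_iid.iIndep
  have hdis : Disjoint ({n} : Set ℕ) (Set.Iio n) := by
    simp [Set.disjoint_left]
  have h := ProbabilityTheory.indep_iSup_of_disjoint
    (fun l => measurable_iff_comap_le.mp (measurable_pi_apply l)) hii hdis
  have hsing : (⨆ i ∈ ({n} : Set ℕ),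
      MeasurableSpace.comap (fun e : ℕ → E => e i) inferInstance)
      = MeasurableSpace.comap (fun e : ℕ → E => e n) inferInstance := by
    simp
  rw [hsing] at h
  exact h

lemma P_succ (k n j : ℕ) :
    b.P k {ω | ω.2 (n + 1) = j} = ∑' i, b.P k {ω | ω.2 n = i} * b.TE i j := by
  haveI := b.μenv_prob
  haveI := b.K_markov k
  rw [P_slice]
  have hstep : ∀ e : ℕ → E, b.K k e {z | z (n + 1) = j}
      = ∑' i, ENNReal.ofReal (convPow b.p i (e n) j) * b.K k e {z | z n = i} := by
    intro e
    have h1 : {z : ℕ → ℕ | z (n + 1) = j} = {z | z (n + 1) = j} ∩ Set.univ :=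
      (Set.inter_univ _).symm
    rw [h1, b.K_step k e n j Set.univ MeasurableSet.univ, Measure.restrict_univ]
    exact lintegral_eval (b.K k e) (fun z => z n) (measurable_pi_apply n)
      (fun i => ENNReal.ofReal (convPow b.p i (e n) j))
  rw [lintegral_congr hstep, lintegral_tsum
    (f := fun i (e : ℕ → E) => ENNReal.ofReal (convPow b.p i (e n) j) * b.K k e {z | z n = i})
    (fun i => ((((convPow_meas b.p_meas i j).comp (measurable_pi_apply n)).ennreal_ofReal).mul
      (Kernel.measurable_coe (b.K k) (measurableSet_slice n i))).aemeasurable)]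
  refine tsum_congr fun i => ?_
  have hmf : Measurable[MeasurableSpace.comap (fun e : ℕ → E => e n) inferInstance]
      fun e : ℕ → E => ENNReal.ofReal (convPow b.p i (e n) j) :=
    (ENNReal.measurable_ofReal.comp (convPow_meas b.p_meas i j)).comp
      (Measurable.of_comap_le le_rfl)
  have hfact := ProbabilityTheory.lintegral_mul_eq_lintegral_mul_lintegral_of_independent_measurableSpace
    (μ := b.μenv) (measurable_iff_comap_le.mp (measurable_pi_apply n)) (MenvE_le E n)
    (b.indep_eval_MenvE n) hmf (b.K_slice_meas k n i)
  rw [hfact, mul_comm]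
  congr 1
  · exact (b.P_slice k n i).symm
  · exact b.lint_comp_eval (fun x => ENNReal.ofReal (convPow b.p i x j))
      (ENNReal.measurable_ofReal.comp (convPow_meas b.p_meas i j)) n

lemma AE_succ' (n i j : ℕ) : b.AE (n + 1) i j = ∑' l, b.AE n i l * b.TE l j := by
  induction n generalizing i j with
  | zero =>
    show (∑' l, b.TE i l * b.AE 0 l j) = ∑' l, b.AE 0 i l * b.TE l j
    rw [tsum_eq_single j (by
      intro l hl
      show b.TE i l * (if j = l then 1 else 0) = 0
      rw [if_neg (fun h => hl h.symm), mul_zero])]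
    rw [tsum_eq_single i (by
      intro l hl
      show (if l = i then 1 else 0) * b.TE l j = 0
      rw [if_neg hl, zero_mul])]
    show b.TE i j * (if j = j then 1 else 0) = (if i = i then 1 else 0) * b.TE i j
    simp
  | succ n ih =>
    show (∑' l, b.TE i l * b.AE (n + 1) l j) = ∑' l, b.AE (n + 1) i l * b.TE l j
    calc (∑' l, b.TE i l * b.AE (n + 1) l j)
        = ∑' l, b.TE i l * ∑' m, b.AE n l m * b.TE m j := by
          exact tsum_congr fun l => by rw [ih]
      _ = ∑' l, ∑' m, b.TE i l * (b.AE n l m * b.TE m j) := by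
          exact tsum_congr fun l => ENNReal.tsum_mul_left.symm
      _ = ∑' m, (∑' l, b.TE i l * b.AE n l m) * b.TE m j := by
          rw [ENNReal.tsum_comm]
          refine tsum_congr fun m => ?_
          rw [← ENNReal.tsum_mul_right]
          exact tsum_congr fun l => by ring
      _ = ∑' m, b.AE (n + 1) i m * b.TE m j := rfl

lemma P_eq_AE (k n j : ℕ) : b.P k {ω | ω.2 n = j} = b.AE n k j := by
  induction n generalizing j with
  | zero => rw [P_zero]; rfl
  | succ n ih =>
    rw [P_succ, AE_succ']
    exact tsum_congr fun i => by rw [ih]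

end BPRE

end Backbone2

section MatrixProps

namespace BPRE

variable {E : Type*} [MeasurableSpace E] (b : BPRE E)

lemma tsum_ofReal_convPow (i : ℕ) (e : E) :
    ∑' j, ENNReal.ofReal (convPow b.p i e j) = 1 := by
  have h := convPGF (p := b.p) b.p_nonneg i e 1
  simpa [tsum_ofReal_p b.p_nonneg b.p_tsum e] using h

lemma ofReal_convPow_le_one (i j : ℕ) (e : E) :
    ENNReal.ofReal (convPow b.p i e j) ≤ 1 := by
  rw [← b.tsum_ofReal_convPow i e]
  exact ENNReal.le_tsum j

lemma TE_le_one (i j : ℕ) : b.TE i j ≤ 1 := by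
  haveI := b.μenv_prob
  calc b.TE i j ≤ ∫⁻ _, 1 ∂b.μenv := lintegral_mono fun e => b.ofReal_convPow_le_one i j (e 0)
    _ = 1 := by rw [lintegral_one, measure_univ]

lemma tsum_TE (i : ℕ) : ∑' j, b.TE i j = 1 := by
  haveI := b.μenv_prob
  calc ∑' j, b.TE i j = ∑' j, ∫⁻ e, ENNReal.ofReal (convPow b.p i (e 0) j) ∂b.μenv := rfl
    _ = ∫⁻ e, ∑' j, ENNReal.ofReal (convPow b.p i (e 0) j) ∂b.μenv :=
        (lintegral_tsum (f := fun j (e : ℕ → E) => ENNReal.ofReal (convPow b.p i (e 0) j))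
          (fun j => (((convPow_meas b.p_meas i j).comp
            (measurable_pi_apply 0)).ennreal_ofReal).aemeasurable)).symm
    _ = 1 := by
        have h1 := lintegral_congr (μ := b.μenv)
          (f := fun e : ℕ → E => ∑' j, ENNReal.ofReal (convPow b.p i (e 0) j))
          (g := fun _ => (1 : ℝ≥0∞)) (fun e => b.tsum_ofReal_convPow i (e 0))
        rw [h1, lintegral_one, measure_univ]

lemma TE_diag_ge (k : ℕ) : ENNReal.ofReal (b.γ k) ≤ b.TE k k := by
  haveI := b.μenv_prob
  have hint : Integrable (fun e : ℕ → E => b.p 1 (e 0) ^ k) b.μenv := by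
    refine Integrable.mono' (integrable_const 1)
      ((((b.p_meas 1).comp (measurable_pi_apply 0)).pow_const k).aestronglyMeasurable) ?_
    filter_upwards with e
    rw [Real.norm_eq_abs, abs_of_nonneg (pow_nonneg (b.p_nonneg 1 (e 0)) k)]
    exact pow_le_one₀ (b.p_nonneg 1 (e 0)) (p_le_one b.p_nonneg b.p_tsum 1 (e 0))
  calc ENNReal.ofReal (b.γ k)
      = ∫⁻ e, ENNReal.ofReal (b.p 1 (e 0) ^ k) ∂b.μenv :=
        MeasureTheory.ofReal_integral_eq_lintegral_ofReal hint
          (by filter_upwards with e; exact pow_nonneg (b.p_nonneg 1 (e 0)) k)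
    _ ≤ b.TE k k :=
        lintegral_mono fun e => ENNReal.ofReal_le_ofReal (convPow_ge_pow b.p_nonneg k (e 0))

lemma TE_eq_zero (hae : ∀ᵐ e ∂b.μenv, b.p 0 (e 0) = 0) {i j : ℕ} (hji : j < i) :
    b.TE i j = 0 := by
  have h0 : ∀ᵐ e ∂b.μenv, ENNReal.ofReal (convPow b.p i (e 0) j) = 0 := by
    filter_upwards [hae] with e he
    rw [convPow_eq_zero he b.p_nonneg i j hji]
    simp
  calc b.TE i j = ∫⁻ _, 0 ∂b.μenv := lintegral_congr_ae h0
    _ = 0 := lintegral_zero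

lemma AE_eq_zero (hae : ∀ᵐ e ∂b.μenv, b.p 0 (e 0) = 0) (n : ℕ) :
    ∀ i j, j < i → b.AE n i j = 0 := by
  induction n with
  | zero =>
    intro i j hji
    show (if j = i then 1 else 0) = 0
    rw [if_neg (by omega)]
  | succ n ih =>
    intro i j hji
    show (∑' l, b.TE i l * b.AE n l j) = 0
    rw [ENNReal.tsum_eq_zero]
    intro l
    rcases lt_or_ge l i with h | h
    · rw [b.TE_eq_zero hae h, zero_mul]
    · rw [ih l j (by omega), mul_zero]

lemma AE_mono (k n j : ℕ) :
    ENNReal.ofReal (b.γ k) * b.AE n k j ≤ b.AE (n + 1) k j := by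
  calc ENNReal.ofReal (b.γ k) * b.AE n k j ≤ b.TE k k * b.AE n k j :=
        mul_le_mul_left (b.TE_diag_ge k) _
    _ ≤ ∑' l, b.TE k l * b.AE n l j := ENNReal.le_tsum k
    _ = b.AE (n + 1) k j := rfl

lemma AE_tsum_le (n i : ℕ) : ∑' j, b.AE n i j ≤ 1 := by
  induction n generalizing i with
  | zero =>
    rw [tsum_eq_single i (by intro j hj; show (if j = i then 1 else 0) = 0; rw [if_neg hj])]
    show (if i = i then 1 else 0) ≤ 1
    simp
  | succ n ih =>
    show (∑' j, ∑' l, b.TE i l * b.AE n l j) ≤ 1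
    rw [ENNReal.tsum_comm]
    calc (∑' l, ∑' j, b.TE i l * b.AE n l j)
        = ∑' l, b.TE i l * ∑' j, b.AE n l j := tsum_congr fun l => ENNReal.tsum_mul_left
      _ ≤ ∑' l, b.TE i l * 1 := ENNReal.tsum_le_tsum fun l => mul_le_mul_right (ih l) _
      _ = 1 := by simpa using b.tsum_TE i

lemma AE_le_one (n i j : ℕ) : b.AE n i j ≤ 1 :=
  le_trans (ENNReal.le_tsum j) (b.AE_tsum_le n i)

lemma G_repr (k n : ℕ) {t : ℝ} (ht0 : 0 ≤ t) :
    ∫ ω, t ^ (ω.2 n) ∂b.P k = (∑' j, ENNReal.ofReal t ^ j * b.AE n k j).toReal := by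
  haveI := b.P_prob k
  have hmz : Measurable fun ω : (ℕ → E) × (ℕ → ℕ) => ω.2 n :=
    (measurable_pi_apply n).comp measurable_snd
  have hm2 : Measurable fun ω : (ℕ → E) × (ℕ → ℕ) => t ^ (ω.2 n) :=
    measurable_from_top.comp hmz
  rw [integral_eq_lintegral_of_nonneg_ae (by filter_upwards with ω; positivity)
    hm2.aestronglyMeasurable]
  congr 1
  rw [lintegral_eval (b.P k) (fun ω => ω.2 n) hmz (fun i => ENNReal.ofReal (t ^ i))]
  refine tsum_congr fun j => ?_
  rw [ENNReal.ofReal_pow ht0]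
  congr 1
  exact b.P_eq_AE k n j

end BPRE

end MatrixProps

section Analytic

namespace BPRE

variable {E : Type*} [MeasurableSpace E] (b : BPRE E)

/-- `α(e) = p₁(e) + (1 - p₁(e)) t` -/
def alpha (t : ℝ) (e : E) : ℝ := b.p 1 e + (1 - b.p 1 e) * t

/-- `β_i = ∫ α(e)^i dν(e)` -/
def betaE (t : ℝ) (i : ℕ) : ℝ≥0∞ :=
  ∫⁻ e, ENNReal.ofReal (b.alpha t (e 0)) ^ i ∂b.μenv

lemma alpha_nonneg {t : ℝ} (ht0 : 0 ≤ t) (e : E) : 0 ≤ b.alpha t e :=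
  add_nonneg (b.p_nonneg 1 e)
    (mul_nonneg (by linarith [p_le_one b.p_nonneg b.p_tsum 1 e]) ht0)

lemma alpha_le_one {t : ℝ} (ht0 : 0 ≤ t) (ht1 : t ≤ 1) (e : E) : b.alpha t e ≤ 1 := by
  have h1 : b.p 1 e ≤ 1 := p_le_one b.p_nonneg b.p_tsum 1 e
  have h2 : (1 - b.p 1 e) * t ≤ 1 - b.p 1 e := mul_le_of_le_one_right (by linarith) ht1
  unfold alpha
  linarith

lemma alpha_meas (t : ℝ) : Measurable fun e : ℕ → E => b.alpha t (e 0) := by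
  have h : Measurable fun e : ℕ → E => b.p 1 (e 0) :=
    (b.p_meas 1).comp (measurable_pi_apply 0)
  exact h.add ((measurable_const.sub h).mul measurable_const)

lemma FE_le (hae : ∀ᵐ e ∂b.μenv, b.p 0 (e 0) = 0) {t : ℝ} (ht0 : 0 ≤ t) (ht1 : t ≤ 1) (i : ℕ) :
    ∑' j, b.TE i j * ENNReal.ofReal t ^ j ≤ ENNReal.ofReal t ^ i * b.betaE t i := by
  calc ∑' j, b.TE i j * ENNReal.ofReal t ^ j
      = ∑' j, ∫⁻ e, ENNReal.ofReal (convPow b.p i (e 0) j) * ENNReal.ofReal t ^ j ∂b.μenv := by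
        refine tsum_congr fun j => ?_
        exact (lintegral_mul_const (ENNReal.ofReal t ^ j)
          (((convPow_meas b.p_meas i j).comp (measurable_pi_apply 0)).ennreal_ofReal)).symm
    _ = ∫⁻ e, ∑' j, ENNReal.ofReal (convPow b.p i (e 0) j) * ENNReal.ofReal t ^ j ∂b.μenv :=
        (lintegral_tsum (f := fun j (e : ℕ → E) =>
            ENNReal.ofReal (convPow b.p i (e 0) j) * ENNReal.ofReal t ^ j)
          (fun j => ((((convPow_meas b.p_meas i j).comp
            (measurable_pi_apply 0)).ennreal_ofReal).mul_const _).aemeasurable)).symm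
    _ = ∫⁻ e, (∑' d, ENNReal.ofReal (b.p d (e 0)) * ENNReal.ofReal t ^ d) ^ i ∂b.μenv :=
        lintegral_congr fun e => convPGF b.p_nonneg i (e 0) (ENNReal.ofReal t)
    _ ≤ ∫⁻ e, (ENNReal.ofReal t * ENNReal.ofReal (b.alpha t (e 0))) ^ i ∂b.μenv := by
        refine lintegral_mono_ae ?_
        filter_upwards [hae] with e he
        exact pow_le_pow_left' (fq_le b.p_nonneg b.p_tsum he ht0 ht1) i
    _ = ENNReal.ofReal t ^ i * b.betaE t i := by
        simp_rw [mul_pow]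
        rw [lintegral_const_mul _ ((b.alpha_meas t).ennreal_ofReal.pow_const i)]
        rfl

lemma betaE_antitone {t : ℝ} (ht0 : 0 ≤ t) (ht1 : t ≤ 1) : Antitone (b.betaE t) := by
  intro i i' hii'
  refine lintegral_mono fun e => ?_
  have ha : ENNReal.ofReal (b.alpha t (e 0)) ≤ 1 :=
    ENNReal.ofReal_le_one.mpr (b.alpha_le_one ht0 ht1 (e 0))
  calc ENNReal.ofReal (b.alpha t (e 0)) ^ i'
      = ENNReal.ofReal (b.alpha t (e 0)) ^ i * ENNReal.ofReal (b.alpha t (e 0)) ^ (i' - i) := by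
        rw [← pow_add]; congr 1; omega
    _ ≤ ENNReal.ofReal (b.alpha t (e 0)) ^ i * 1 := mul_le_mul_right (pow_le_one' ha _) _
    _ = ENNReal.ofReal (b.alpha t (e 0)) ^ i := mul_one _

lemma measurableSet_p1_eq_one : MeasurableSet {e : ℕ → E | b.p 1 (e 0) = 1} := by
  have : {e : ℕ → E | b.p 1 (e 0) = 1} = (fun e : ℕ → E => b.p 1 (e 0)) ⁻¹' {1} := rfl
  rw [this]
  exact ((b.p_meas 1).comp (measurable_pi_apply 0)) (measurableSet_singleton 1)

lemma betaE_tendsto {t : ℝ} (ht0 : 0 ≤ t) (ht1 : t < 1) :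
    Tendsto (b.betaE t) atTop (𝓝 (b.μenv {e | b.p 1 (e 0) = 1})) := by
  haveI := b.μenv_prob
  have hA := b.measurableSet_p1_eq_one
  have h := MeasureTheory.tendsto_lintegral_of_dominated_convergence (μ := b.μenv)
    (F := fun i e => ENNReal.ofReal (b.alpha t (e 0)) ^ i)
    (f := Set.indicator {e : ℕ → E | b.p 1 (e 0) = 1} fun _ => (1 : ℝ≥0∞))
    (bound := fun _ => 1)
    (fun i => (b.alpha_meas t).ennreal_ofReal.pow_const i)
    (fun i => by
      filter_upwards with e
      exact pow_le_one' (ENNReal.ofReal_le_one.mpr (b.alpha_le_one ht0 ht1.le (e 0))) i)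
    (by rw [lintegral_one, measure_univ]; exact ENNReal.one_ne_top)
    (by
      filter_upwards with e
      by_cases h1 : b.p 1 (e 0) = 1
      · have hα : ENNReal.ofReal (b.alpha t (e 0)) = 1 := by
          unfold alpha; rw [h1]; norm_num
        have hmem : e ∈ {e : ℕ → E | b.p 1 (e 0) = 1} := h1
        rw [Set.indicator_of_mem hmem]
        simp only [hα, one_pow]
        exact tendsto_const_nhds
      · have hlt : ENNReal.ofReal (b.alpha t (e 0)) < 1 := by
          rw [ENNReal.ofReal_lt_one]
          have hlt' : b.p 1 (e 0) < 1 :=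
            lt_of_le_of_ne (p_le_one b.p_nonneg b.p_tsum 1 (e 0)) h1
          unfold alpha
          nlinarith
        have hmem : e ∉ {e : ℕ → E | b.p 1 (e 0) = 1} := h1
        rw [Set.indicator_of_notMem hmem]
        exact ENNReal.tendsto_pow_atTop_nhds_zero_of_lt_one hlt)
  have hind : ∫⁻ a, Set.indicator {e : ℕ → E | b.p 1 (e 0) = 1} (fun _ => (1 : ℝ≥0∞)) a ∂b.μenv
      = b.μenv {e | b.p 1 (e 0) = 1} := by
    rw [lintegral_indicator hA]
    simp
  rw [hind] at h
  exact h

lemma m_nonneg (e : E) : 0 ≤ b.m e :=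
  tsum_nonneg fun i => mul_nonneg (Nat.cast_nonneg i) (b.p_nonneg i e)

lemma m_eq_one {e : E} (h1 : b.p 1 e = 1) : b.m e = 1 := by
  have hz : ∀ i, i ≠ 1 → b.p i e = 0 := by
    intro i hi
    have hp : b.p 1 e + b.p i e ≤ ∑' d, b.p d e := by
      have hsum := Summable.sum_le_tsum ({1, i} : Finset ℕ) (fun d _ => b.p_nonneg d e)
        (p_summable b.p_nonneg b.p_tsum e)
      rwa [Finset.sum_pair (fun hh => hi hh.symm)] at hsum
    have h2 := b.p_tsum e
    have h3 := b.p_nonneg i e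
    linarith
  unfold m
  rw [tsum_eq_single 1 (fun i hi => by rw [hz i hi, mul_zero])]
  rw [h1]
  norm_num

lemma integrable_p1_pow (k : ℕ) : Integrable (fun e : ℕ → E => b.p 1 (e 0) ^ k) b.μenv := by
  haveI := b.μenv_prob
  refine Integrable.mono' (integrable_const 1)
    ((((b.p_meas 1).comp (measurable_pi_apply 0)).pow_const k).aestronglyMeasurable) ?_
  filter_upwards with e
  rw [Real.norm_eq_abs, abs_of_nonneg (pow_nonneg (b.p_nonneg 1 (e 0)) k)]
  exact pow_le_one₀ (b.p_nonneg 1 (e 0)) (p_le_one b.p_nonneg b.p_tsum 1 (e 0))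

lemma mu_p1_lt_gamma (hstand : b.Standing) {k : ℕ} (hγpos : 0 < b.γ k)
    {rk : ℝ} (hrk : b.γ k = ∫ e, b.m (e 0) ^ (-rk) ∂b.μenv) :
    b.μenv {e | b.p 1 (e 0) = 1} < ENNReal.ofReal (b.γ k) := by
  haveI := b.μenv_prob
  set A := {e : ℕ → E | b.p 1 (e 0) = 1} with hA_def
  have hA : MeasurableSet A := b.measurableSet_p1_eq_one
  have hintp := b.integrable_p1_pow k
  have haletoγ : (b.μenv A).toReal ≤ b.γ k := by
    have h1 : ∫ e in A, b.p 1 (e 0) ^ k ∂b.μenv = (b.μenv A).toReal := by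
      rw [setIntegral_congr_fun (f := fun e : ℕ → E => b.p 1 (e 0) ^ k)
        (g := fun _ => (1 : ℝ)) hA (fun e he => by
          show b.p 1 (e 0) ^ k = 1
          rw [show b.p 1 (e 0) = 1 from he, one_pow])]
      rw [setIntegral_const]
      simp [Measure.real]
    calc (b.μenv A).toReal = ∫ e in A, b.p 1 (e 0) ^ k ∂b.μenv := h1.symm
      _ ≤ ∫ e, b.p 1 (e 0) ^ k ∂b.μenv := setIntegral_le_integral hintp
          (by filter_upwards with e; exact pow_nonneg (b.p_nonneg 1 (e 0)) k)
      _ = b.γ k := rfl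
  by_contra hcon
  push_neg at hcon
  have haeq : (b.μenv A).toReal = b.γ k := by
    have hge : b.γ k ≤ (b.μenv A).toReal :=
      (ENNReal.ofReal_le_iff_le_toReal (measure_ne_top _ _)).mp hcon
    linarith
  set h : (ℕ → E) → ℝ := fun e => b.m (e 0) ^ (-rk) with hh_def
  have hint : Integrable h b.μenv := by
    by_contra hni
    rw [integral_undef hni] at hrk
    linarith
  have hnonneg : ∀ e, 0 ≤ h e := fun e => Real.rpow_nonneg (b.m_nonneg (e 0)) _
  have hAone : Set.EqOn h (fun _ => (1 : ℝ)) A := fun e he => by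
    show b.m (e 0) ^ (-rk) = 1
    rw [b.m_eq_one he, Real.one_rpow]
  have hAint : ∫ e in A, h e ∂b.μenv = (b.μenv A).toReal := by
    rw [setIntegral_congr_fun (g := fun _ => (1 : ℝ)) hA hAone, setIntegral_const]
    simp [Measure.real]
  have hcompl0 : ∫ e in Aᶜ, h e ∂b.μenv = 0 := by
    have hs := integral_add_compl hA hint
    rw [hAint, haeq] at hs
    rw [hrk] at hs
    linarith
  have hae0 : h =ᵐ[b.μenv.restrict Aᶜ] 0 :=
    (setIntegral_eq_zero_iff_of_nonneg_ae
      (Filter.Eventually.of_forall hnonneg) hint.integrableOn).mp hcompl0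
  have haeAc : ∀ᵐ e ∂b.μenv, e ∈ Aᶜ → h e = 0 := (ae_restrict_iff' hA.compl).mp hae0
  have hlog0 : (fun e : ℕ → E => Real.log (b.m (e 0))) =ᵐ[b.μenv] 0 := by
    filter_upwards [haeAc] with e hc
    by_cases he : e ∈ A
    · show Real.log (b.m (e 0)) = 0
      rw [b.m_eq_one he, Real.log_one]
    · have h0 : h e = 0 := hc he
      have hm0 : b.m (e 0) = 0 := by
        by_contra hm
        have hpos : 0 < b.m (e 0) := lt_of_le_of_ne (b.m_nonneg (e 0)) (Ne.symm hm)
        exact absurd h0 (ne_of_gt (Real.rpow_pos_of_pos hpos _))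
      show Real.log (b.m (e 0)) = 0
      rw [hm0, Real.log_zero]
  have hzero : ∫ e, Real.log (b.m (e 0)) ∂b.μenv = 0 := by
    rw [integral_congr_ae hlog0]
    simp
  linarith [hstand.2.1]

lemma gamma_pos (hZ11 : 0 < b.probZ 1 1 1) {k : ℕ} (hk : 1 ≤ k) : 0 < b.γ k := by
  haveI := b.μenv_prob
  have h1 : b.P 1 {ω | ω.2 1 = 1} = b.TE 1 1 := by
    rw [b.P_eq_AE 1 1 1]
    show (∑' l, b.TE 1 l * b.AE 0 l 1) = b.TE 1 1
    rw [tsum_eq_single 1 (fun l hl => by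
      show b.TE 1 l * (if 1 = l then 1 else 0) = 0
      rw [if_neg (fun hh => hl hh.symm), mul_zero])]
    show b.TE 1 1 * (if 1 = 1 then 1 else 0) = b.TE 1 1
    simp
  have hconv : ∀ e : E, convPow b.p 1 e 1 = b.p 1 e := by
    intro e
    show ∑ l ∈ Finset.range 2, convPow b.p 0 e l * b.p (1 - l) e = b.p 1 e
    simp [convPow, Finset.sum_range_succ]
  have hTE : b.TE 1 1 = ∫⁻ e, ENNReal.ofReal (b.p 1 (e 0)) ∂b.μenv :=
    lintegral_congr fun e => by rw [hconv]
  have hne : ¬ (∀ᵐ e ∂b.μenv, b.p 1 (e 0) = 0) := by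
    intro hae
    have hTE0 : b.TE 1 1 = 0 := by
      rw [hTE, lintegral_congr_ae (g := fun _ => (0 : ℝ≥0∞))
        (by filter_upwards [hae] with e he; rw [he, ENNReal.ofReal_zero]), lintegral_zero]
    have : b.probZ 1 1 1 = 0 := by
      show (b.P 1 {ω | ω.2 1 = 1}).toReal = 0
      rw [h1, hTE0]
      simp
    linarith
  have hsupp : 0 < b.μenv (Function.support fun e : ℕ → E => b.p 1 (e 0) ^ k) := by
    rcases (zero_le : (0:ℝ≥0∞) ≤ b.μenv (Function.support fun e : ℕ → E => b.p 1 (e 0) ^ k)).lt_or_eq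
      with hpos | hzero
    · exact hpos
    · exfalso
      apply hne
      have hnm := measure_eq_zero_iff_ae_notMem.mp hzero.symm
      filter_upwards [hnm] with e he
      have hpk : b.p 1 (e 0) ^ k = 0 := Function.notMem_support.mp he
      exact pow_eq_zero_iff (by omega) |>.mp hpk
  exact (integral_pos_iff_support_of_nonneg_ae
    (by filter_upwards with e; exact pow_nonneg (b.p_nonneg 1 (e 0)) k)
    (b.integrable_p1_pow k)).mpr hsupp

end BPRE

end Analytic

section Recursion

namespace BPRE

variable {E : Type*} [MeasurableSpace E] (b : BPRE E)

lemma FE_tsum_le_one {t : ℝ} (ht0 : 0 ≤ t) (ht1 : t ≤ 1) (i : ℕ) :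
    ∑' j, b.TE i j * ENNReal.ofReal t ^ j ≤ 1 := by
  have hs1 : ENNReal.ofReal t ≤ 1 := ENNReal.ofReal_le_one.mpr ht1
  calc ∑' j, b.TE i j * ENNReal.ofReal t ^ j
      ≤ ∑' j, b.TE i j * 1 :=
        ENNReal.tsum_le_tsum fun j => mul_le_mul_right (pow_le_one' hs1 j) _
    _ = ∑' j, b.TE i j := by simp
    _ = 1 := b.tsum_TE i

lemma betaE_le_one {t : ℝ} (ht0 : 0 ≤ t) (ht1 : t ≤ 1) (i : ℕ) : b.betaE t i ≤ 1 := by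
  haveI := b.μenv_prob
  calc b.betaE t i ≤ ∫⁻ _, 1 ∂b.μenv :=
        lintegral_mono fun e =>
          pow_le_one' (ENNReal.ofReal_le_one.mpr (b.alpha_le_one ht0 ht1 (e 0))) i
    _ = 1 := by rw [lintegral_one, measure_univ]

lemma SE_succ_le (hae : ∀ᵐ e ∂b.μenv, b.p 0 (e 0) = 0) {t : ℝ} (ht0 : 0 ≤ t) (ht1 : t ≤ 1)
    (k n I : ℕ) :
    ∑' j, ENNReal.ofReal t ^ j * b.AE (n + 1) k j
      ≤ (∑ i ∈ Finset.range I, b.AE n k i)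
        + b.betaE t I * ∑' i, ENNReal.ofReal t ^ i * b.AE n k i := by
  set s := ENNReal.ofReal t with hsdef
  have hs1 : s ≤ 1 := ENNReal.ofReal_le_one.mpr ht1
  have hswap : ∑' j, s ^ j * b.AE (n + 1) k j
      = ∑' i, b.AE n k i * (∑' j, b.TE i j * s ^ j) := by
    calc ∑' j, s ^ j * b.AE (n + 1) k j
        = ∑' j, s ^ j * ∑' i, b.AE n k i * b.TE i j := by
          refine tsum_congr fun j => ?_
          rw [b.AE_succ' n k j]
      _ = ∑' j, ∑' i, s ^ j * (b.AE n k i * b.TE i j) :=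
          tsum_congr fun j => ENNReal.tsum_mul_left.symm
      _ = ∑' i, ∑' j, s ^ j * (b.AE n k i * b.TE i j) := ENNReal.tsum_comm
      _ = ∑' i, b.AE n k i * ∑' j, b.TE i j * s ^ j := by
          refine tsum_congr fun i => ?_
          rw [← ENNReal.tsum_mul_left]
          exact tsum_congr fun j => by ring
  rw [hswap]
  have hsplit := (Summable.sum_add_tsum_nat_add'
    (f := fun i => b.AE n k i * (∑' j, b.TE i j * s ^ j)) (k := I) ENNReal.summable).symm
  rw [hsplit]
  refine add_le_add ?_ ?_
  · refine Finset.sum_le_sum fun i _ => ?_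
    calc b.AE n k i * (∑' j, b.TE i j * s ^ j) ≤ b.AE n k i * 1 :=
          mul_le_mul_right (b.FE_tsum_le_one ht0 ht1 i) _
      _ = b.AE n k i := mul_one _
  · have h1 : ∀ m, b.AE n k (m + I) * (∑' j, b.TE (m + I) j * s ^ j)
        ≤ b.betaE t I * (s ^ (m + I) * b.AE n k (m + I)) := by
      intro m
      have hFE : (∑' j, b.TE (m + I) j * s ^ j) ≤ s ^ (m + I) * b.betaE t I := by
        calc (∑' j, b.TE (m + I) j * s ^ j) ≤ s ^ (m + I) * b.betaE t (m + I) :=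
              b.FE_le hae ht0 ht1 (m + I)
          _ ≤ s ^ (m + I) * b.betaE t I :=
              mul_le_mul_right (b.betaE_antitone ht0 ht1 (Nat.le_add_left I m)) _
      calc b.AE n k (m + I) * (∑' j, b.TE (m + I) j * s ^ j)
          ≤ b.AE n k (m + I) * (s ^ (m + I) * b.betaE t I) := mul_le_mul_right hFE _
        _ = b.betaE t I * (s ^ (m + I) * b.AE n k (m + I)) := by ring
    calc (∑' m, b.AE n k (m + I) * (∑' j, b.TE (m + I) j * s ^ j))
        ≤ ∑' m, b.betaE t I * (s ^ (m + I) * b.AE n k (m + I)) := ENNReal.tsum_le_tsum h1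
      _ = b.betaE t I * ∑' m, s ^ (m + I) * b.AE n k (m + I) := ENNReal.tsum_mul_left
      _ ≤ b.betaE t I * ∑' i, s ^ i * b.AE n k i := by
          refine mul_le_mul_right ?_ _
          have := (Summable.sum_add_tsum_nat_add'
            (f := fun i => s ^ i * b.AE n k i) (k := I) ENNReal.summable)
          calc (∑' m, s ^ (m + I) * b.AE n k (m + I))
              ≤ (∑ i ∈ Finset.range I, s ^ i * b.AE n k i)
                + ∑' m, s ^ (m + I) * b.AE n k (m + I) := le_add_self
            _ = ∑' i, s ^ i * b.AE n k i := this

end BPRE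

end Recursion
/-- **Theorem 2 c) (convergence of the normalized generating functions).**  For a
supercritical BPRE with `p₀(ξ₀) = 0` a.s. and `ℙ(Z₁ = 1 | Z₀ = 1) > 0`, fix `k ≥ 1`,
let `rk > 0` solve `γ_k = 𝔼[m₀ ^ (-rk)]` and assume `𝔼[m₀ ^ (rk + ε)] < ∞` for some
`ε > 0`.  If `q j = q_{k,j} = lim_n ℙ_k(Z_n = j)/γ_k ^ n` for `j ≥ k`, then for every
`t ∈ [0,1)` the sequence `n ↦ G_{k,n}(t)/γ_k ^ n` (where `G_{k,n}(t) = 𝔼_k[t ^ Z_n]`)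
is nondecreasing and converges to `Q_k(t) = ∑_{j ≥ k} q_{k,j} t ^ j`. -/
theorem pgf_normalized_convergence {E : Type*} [MeasurableSpace E] (b : BPRE E)
    (hstand : b.Standing) (hZ11 : 0 < b.probZ 1 1 1)
    (k : ℕ) (hk : 1 ≤ k)
    (rk : ℝ) (hrk_pos : 0 < rk)
    (hrk : b.γ k = ∫ e, b.m (e 0) ^ (-rk) ∂b.μenv)
    (ε : ℝ) (hε : 0 < ε)
    (hmom : Integrable (fun e : ℕ → E => b.m (e 0) ^ (rk + ε)) b.μenv)
    (q : ℕ → ℝ)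
    (hq : ∀ j, k ≤ j → Tendsto (fun n => b.probZ k n j / b.γ k ^ n) atTop (𝓝 (q j))) :
    ∀ t : ℝ, 0 ≤ t → t < 1 →
      Monotone (fun n => (∫ ω, t ^ (ω.2 n) ∂b.P k) / b.γ k ^ n) ∧
        Tendsto (fun n => (∫ ω, t ^ (ω.2 n) ∂b.P k) / b.γ k ^ n) atTop
          (𝓝 (∑' j : ℕ, if k ≤ j then q j * t ^ j else 0)) := by
  intro t ht0 ht1
  haveI := b.μenv_prob
  have hγ : 0 < b.γ k := b.gamma_pos hZ11 hk
  have hae : ∀ᵐ e ∂b.μenv, b.p 0 (e 0) = 0 := hstand.2.2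
  have hs1 : ENNReal.ofReal t ≤ 1 := ENNReal.ofReal_le_one.mpr ht1.le
  set γ : ℝ := b.γ k with hγdef
  have hAEfin : ∀ n j, b.AE n k j ≠ ∞ := fun n j =>
    ne_top_of_le_ne_top ENNReal.one_ne_top (b.AE_le_one n k j)
  have hsfin : ∀ j : ℕ, (ENNReal.ofReal t) ^ j ≠ ∞ := fun j =>
    ENNReal.pow_ne_top ENNReal.ofReal_ne_top
  have htermfin : ∀ n j, ENNReal.ofReal t ^ j * b.AE n k j ≠ ∞ :=
    fun n j => ENNReal.mul_ne_top (hsfin j) (hAEfin n j)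
  have hSE_le : ∀ n, (∑' j, ENNReal.ofReal t ^ j * b.AE n k j) ≤ 1 := by
    intro n
    calc (∑' j, ENNReal.ofReal t ^ j * b.AE n k j) ≤ ∑' j, 1 * b.AE n k j :=
          ENNReal.tsum_le_tsum fun j => mul_le_mul_left (pow_le_one' hs1 j) _
      _ = ∑' j, b.AE n k j := by simp
      _ ≤ 1 := b.AE_tsum_le n k
  have hSEfin : ∀ n, (∑' j, ENNReal.ofReal t ^ j * b.AE n k j) ≠ ∞ :=
    fun n => ne_top_of_le_ne_top ENNReal.one_ne_top (hSE_le n)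
  set pnj : ℕ → ℕ → ℝ := fun n j => (b.AE n k j).toReal with hpnjdef
  have hpnj_nonneg : ∀ n j, 0 ≤ pnj n j := fun n j => ENNReal.toReal_nonneg
  set G : ℕ → ℝ := fun n => (∑' j, ENNReal.ofReal t ^ j * b.AE n k j).toReal with hGdef
  have hG : ∀ n, ∫ ω, t ^ (ω.2 n) ∂b.P k = G n := fun n => b.G_repr k n ht0
  have hterm_toReal : ∀ n j, (ENNReal.ofReal t ^ j * b.AE n k j).toReal = t ^ j * pnj n j := by
    intro n j
    rw [ENNReal.toReal_mul, ENNReal.toReal_pow, ENNReal.toReal_ofReal ht0]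
  have hGsum : ∀ n, G n = ∑' j, t ^ j * pnj n j := by
    intro n
    show (∑' j, ENNReal.ofReal t ^ j * b.AE n k j).toReal = _
    rw [ENNReal.tsum_toReal_eq (htermfin n)]
    exact tsum_congr (hterm_toReal n)
  have hsummG : ∀ n, Summable fun j => t ^ j * pnj n j := by
    intro n
    have h := ENNReal.summable_toReal (hSEfin n)
    exact h.congr (hterm_toReal n)
  have hG_nonneg : ∀ n, 0 ≤ G n := fun n => ENNReal.toReal_nonneg
  have hpnj_step : ∀ n j, γ * pnj n j ≤ pnj (n + 1) j := by
    intro n j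
    have h := b.AE_mono k n j
    have h2 := ENNReal.toReal_mono (hAEfin (n + 1) j) h
    rwa [ENNReal.toReal_mul, ENNReal.toReal_ofReal hγ.le] at h2
  have hG_step : ∀ n, γ * G n ≤ G (n + 1) := by
    intro n
    rw [hGsum n, hGsum (n + 1), ← tsum_mul_left]
    refine Summable.tsum_le_tsum (fun j => ?_) ((hsummG n).mul_left γ) (hsummG (n + 1))
    calc γ * (t ^ j * pnj n j) = t ^ j * (γ * pnj n j) := by ring
      _ ≤ t ^ j * pnj (n + 1) j :=
          mul_le_mul_of_nonneg_left (hpnj_step n j) (pow_nonneg ht0 j)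
  have hratio : ∀ u : ℕ → ℝ, (∀ n, 0 ≤ u n) → (∀ n, γ * u n ≤ u (n + 1)) →
      Monotone fun n => u n / γ ^ n := by
    intro u hu0 hustep
    refine monotone_nat_of_le_succ fun n => ?_
    rw [div_le_div_iff₀ (pow_pos hγ n) (pow_pos hγ (n + 1))]
    calc u n * γ ^ (n + 1) = γ * u n * γ ^ n := by ring
      _ ≤ u (n + 1) * γ ^ n := mul_le_mul_of_nonneg_right (hustep n) (pow_pos hγ n).le
  have hmonoX : Monotone fun n => G n / γ ^ n := hratio G hG_nonneg hG_step
  set q' : ℕ → ℝ := fun j => if k ≤ j then q j else 0 with hq'def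
  have hprobZ : ∀ n j, b.probZ k n j = pnj n j := fun n j =>
    congrArg ENNReal.toReal (b.P_eq_AE k n j)
  have hq' : ∀ j, Tendsto (fun n => pnj n j / γ ^ n) atTop (𝓝 (q' j)) := by
    intro j
    by_cases hkj : k ≤ j
    · have h := hq j hkj
      simp only [hprobZ] at h
      simpa [hq'def, hkj] using h
    · have hz : ∀ n, pnj n j = 0 := fun n => by
        show (b.AE n k j).toReal = 0
        rw [b.AE_eq_zero hae n k j (by omega)]
        simp
      simp only [hq'def, if_neg hkj]
      refine Tendsto.congr (fun n => ?_) tendsto_const_nhds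
      rw [hz n, zero_div]
  have hmono_j : ∀ j, Monotone fun n => pnj n j / γ ^ n := fun j =>
    hratio (fun n => pnj n j) (fun n => hpnj_nonneg n j) (fun n => hpnj_step n j)
  have hle_q' : ∀ n j, pnj n j / γ ^ n ≤ q' j := fun n j =>
    (hmono_j j).ge_of_tendsto (hq' j) n
  have hq'_nonneg : ∀ j, 0 ≤ q' j := fun j =>
    le_trans (div_nonneg (hpnj_nonneg 0 j) (pow_pos hγ 0).le) (hle_q' 0 j)
  have hlta := b.mu_p1_lt_gamma hstand hγ hrk
  have hItend := b.betaE_tendsto ht0 ht1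
  obtain ⟨I, hI⟩ := ((tendsto_order.mp hItend).2 (ENNReal.ofReal γ) hlta).exists
  set ρ : ℝ := (b.betaE t I).toReal with hρdef
  have hβfin : b.betaE t I ≠ ∞ :=
    ne_top_of_le_ne_top ENNReal.one_ne_top (b.betaE_le_one ht0 ht1.le I)
  have hρ0 : 0 ≤ ρ := ENNReal.toReal_nonneg
  have hρlt : ρ < γ := by
    have h := ENNReal.toReal_strict_mono ENNReal.ofReal_ne_top hI
    rwa [ENNReal.toReal_ofReal hγ.le] at h
  set C : ℝ := ∑ i ∈ Finset.range I, q' i with hCdef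
  have hC0 : 0 ≤ C := Finset.sum_nonneg fun i _ => hq'_nonneg i
  have hrec : ∀ n, G (n + 1) ≤ C * γ ^ n + ρ * G n := by
    intro n
    have hEN := b.SE_succ_le hae ht0 ht1.le k n I
    have hhead : (∑ i ∈ Finset.range I, b.AE n k i) ≤ ENNReal.ofReal (C * γ ^ n) := by
      have hterm : ∀ i ∈ Finset.range I, b.AE n k i ≤ ENNReal.ofReal (q' i * γ ^ n) := by
        intro i _
        have h1 : pnj n i ≤ q' i * γ ^ n := by
          have h2 := hle_q' n i
          rwa [div_le_iff₀ (pow_pos hγ n)] at h2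
        calc b.AE n k i = ENNReal.ofReal (pnj n i) := (ENNReal.ofReal_toReal (hAEfin n i)).symm
          _ ≤ ENNReal.ofReal (q' i * γ ^ n) := ENNReal.ofReal_le_ofReal h1
      calc (∑ i ∈ Finset.range I, b.AE n k i)
          ≤ ∑ i ∈ Finset.range I, ENNReal.ofReal (q' i * γ ^ n) := Finset.sum_le_sum hterm
        _ = ENNReal.ofReal (∑ i ∈ Finset.range I, q' i * γ ^ n) :=
            (ENNReal.ofReal_sum_of_nonneg fun i _ =>
              mul_nonneg (hq'_nonneg i) (pow_pos hγ n).le).symm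
        _ = ENNReal.ofReal (C * γ ^ n) := by rw [hCdef, Finset.sum_mul]
    have hEN2 : (∑' j, ENNReal.ofReal t ^ j * b.AE (n + 1) k j)
        ≤ ENNReal.ofReal (C * γ ^ n)
          + b.betaE t I * (∑' j, ENNReal.ofReal t ^ j * b.AE n k j) :=
      le_trans hEN (add_le_add hhead le_rfl)
    have hfin2 : ENNReal.ofReal (C * γ ^ n)
        + b.betaE t I * (∑' j, ENNReal.ofReal t ^ j * b.AE n k j) ≠ ∞ :=
      ENNReal.add_ne_top.mpr ⟨ENNReal.ofReal_ne_top, ENNReal.mul_ne_top hβfin (hSEfin n)⟩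
    have h3 := ENNReal.toReal_mono hfin2 hEN2
    rwa [ENNReal.toReal_add ENNReal.ofReal_ne_top (ENNReal.mul_ne_top hβfin (hSEfin n)),
      ENNReal.toReal_ofReal (mul_nonneg hC0 (pow_pos hγ n).le), ENNReal.toReal_mul] at h3
  set M : ℝ := max (G 0) (C / (γ - ρ)) with hMdef
  have hXM : ∀ n, G n / γ ^ n ≤ M := by
    intro n
    induction n with
    | zero => rw [pow_zero, div_one]; exact le_max_left _ _
    | succ n ihn =>
      have hγn : (0 : ℝ) < γ ^ n := pow_pos hγ n
      have h2 : G n ≤ M * γ ^ n := by rwa [div_le_iff₀ hγn] at ihn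
      have h3 : C ≤ M * (γ - ρ) := by
        have hM2 : C / (γ - ρ) ≤ M := le_max_right _ _
        rwa [div_le_iff₀ (by linarith)] at hM2
      rw [div_le_iff₀ (pow_pos hγ (n + 1))]
      calc G (n + 1) ≤ C * γ ^ n + ρ * G n := hrec n
        _ ≤ C * γ ^ n + ρ * (M * γ ^ n) := by nlinarith
        _ ≤ M * γ ^ (n + 1) := by rw [pow_succ]; nlinarith
  have hsum_part : ∀ N n, ∑ j ∈ Finset.range N, (pnj n j / γ ^ n) * t ^ j ≤ G n / γ ^ n := by
    intro N n
    have hsum_le : ∑ j ∈ Finset.range N, t ^ j * pnj n j ≤ G n := by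
      rw [hGsum n]
      exact Summable.sum_le_tsum _ (fun j _ => mul_nonneg (pow_nonneg ht0 j) (hpnj_nonneg n j)) (hsummG n)
    calc ∑ j ∈ Finset.range N, (pnj n j / γ ^ n) * t ^ j
        = (∑ j ∈ Finset.range N, t ^ j * pnj n j) / γ ^ n := by
          rw [Finset.sum_div]; exact Finset.sum_congr rfl fun j _ => by ring
      _ ≤ G n / γ ^ n := by gcongr
  have hNlim : ∀ N, Tendsto (fun n => ∑ j ∈ Finset.range N, (pnj n j / γ ^ n) * t ^ j) atTop
      (𝓝 (∑ j ∈ Finset.range N, q' j * t ^ j)) := fun N =>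
    tendsto_finset_sum _ fun j _ => (hq' j).mul_const _
  have hpartial : ∀ N, ∑ j ∈ Finset.range N, q' j * t ^ j ≤ M := by
    intro N
    refine le_of_tendsto (hNlim N) ?_
    filter_upwards with n
    exact le_trans (hsum_part N n) (hXM n)
  have hsummq : Summable fun j => q' j * t ^ j :=
    summable_of_sum_range_le (fun j => mul_nonneg (hq'_nonneg j) (pow_nonneg ht0 j)) hpartial
  set L : ℝ := ∑' j, q' j * t ^ j with hLdef
  have hXleL : ∀ n, G n / γ ^ n ≤ L := by
    intro n
    have h1 : G n / γ ^ n = ∑' j, t ^ j * pnj n j / γ ^ n := by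
      rw [hGsum n, tsum_div_const]
    rw [h1]
    refine Summable.tsum_le_tsum (fun j => ?_) ((hsummG n).div_const _) hsummq
    calc t ^ j * pnj n j / γ ^ n = (pnj n j / γ ^ n) * t ^ j := by ring
      _ ≤ q' j * t ^ j := mul_le_mul_of_nonneg_right (hle_q' n j) (pow_nonneg ht0 j)
  have hbdd : BddAbove (Set.range fun n => G n / γ ^ n) := by
    refine ⟨L, ?_⟩
    rintro y ⟨n, rfl⟩
    exact hXleL n
  have hsup := tendsto_atTop_ciSup hmonoX hbdd
  have hsupL : (⨆ n, G n / γ ^ n) = L := by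
    refine le_antisymm (ciSup_le hXleL) ?_
    rw [hLdef]
    refine Summable.tsum_le_of_sum_range_le hsummq fun N => ?_
    refine le_of_tendsto (hNlim N) ?_
    filter_upwards with n
    exact le_trans (hsum_part N n) (le_ciSup hbdd n)
  have hfun : (fun n => (∫ ω, t ^ (ω.2 n) ∂b.P k) / γ ^ n) = fun n => G n / γ ^ n := by
    funext n
    rw [hG n]
  have hLeq : (∑' j : ℕ, if k ≤ j then q j * t ^ j else 0) = L := by
    rw [hLdef]
    refine tsum_congr fun j => ?_
    by_cases hkj : k ≤ j
    · simp [hq'def, hkj]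
    · simp [hq'def, hkj]
  constructor
  · rw [hfun]
    exact hmonoX
  · rw [hfun, hLeq, ← hsupL]
    exact hsup
end
end

section
/- Let φ : ℝ₊ → ℝ₊ be a bounded function and let Y be a positive random variable. Suppose there are constants q ∈ (0,1), a ∈ (0, ∞), C > 0 and t₀ ≥ 0 such that φ(t) ≤ q·𝔼[φ(Y t)] + C·t^{−a} for all t > t₀. If q·𝔼[Y^{−a}] < 1, then φ(t) = O(t^{−a}) as t → ∞; that is, there exists a constant C' > 0 such that φ(t) ≤ C'·t^{−a} for all sufficiently large t. -/
open MeasureTheory Filter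
open scoped ENNReal Topology

/-- **Lemma 4.1 of Liu (1999) (decay rate of solutions of a functional inequation).**
Let `φ : ℝ₊ → ℝ₊` be a bounded (measurable) function and let `Y` be a positive random
variable.  Suppose there are constants `q ∈ (0,1)`, `a ∈ (0,∞)`, `C > 0` and `t₀ ≥ 0`
such that `φ(t) ≤ q * 𝔼[φ(Y t)] + C * t ^ (-a)` for all `t > t₀`.
If `q * 𝔼[Y ^ (-a)] < 1`, then `φ(t) = O(t ^ (-a))` as `t → ∞`; that is, there is a
constant `C' > 0` such that `φ(t) ≤ C' * t ^ (-a)` for all sufficiently large `t`. -/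
theorem decay_rate_functional_inequation
    {Ω : Type*} [MeasurableSpace Ω] (μ : Measure Ω) [IsProbabilityMeasure μ]
    (Y : Ω → ℝ) (hY_meas : Measurable Y) (hY_pos : ∀ᵐ ω ∂μ, 0 < Y ω)
    (φ : ℝ → ℝ) (hφ_meas : Measurable φ)
    (hφ_nonneg : ∀ t, 0 ≤ t → 0 ≤ φ t) (hφ_bdd : ∃ M, ∀ t, 0 ≤ t → φ t ≤ M)
    (q a C t₀ : ℝ) (hq0 : 0 < q) (hq1 : q < 1) (ha : 0 < a) (hC : 0 < C) (ht₀ : 0 ≤ t₀)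
    (hrec : ∀ t, t₀ < t → φ t ≤ q * ∫ ω, φ (Y ω * t) ∂μ + C * t ^ (-a))
    (hmom : ENNReal.ofReal q * ∫⁻ ω, ENNReal.ofReal (Y ω ^ (-a)) ∂μ < 1) :
    ∃ C' > 0, ∀ᶠ t in atTop, φ t ≤ C' * t ^ (-a) := by
  classical
  obtain ⟨M₀, hM₀⟩ := hφ_bdd
  set M : ℝ := max M₀ 0 with hMdef
  have hM_nonneg : 0 ≤ M := le_max_right _ _
  have hφM : ∀ t, 0 ≤ t → φ t ≤ M := fun t ht => (hM₀ t ht).trans (le_max_left _ _)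
  -- the moment integral is finite
  have hq' : ENNReal.ofReal q ≠ 0 := by
    exact ne_of_gt (ENNReal.ofReal_pos.2 hq0)
  have hfin : (∫⁻ ω, ENNReal.ofReal (Y ω ^ (-a)) ∂μ) ≠ ∞ := by
    intro h
    rw [h, ENNReal.mul_top hq'] at hmom
    exact (lt_irrefl _ (hmom.trans (by simp))).elim
  set m : ℝ := (∫⁻ ω, ENNReal.ofReal (Y ω ^ (-a)) ∂μ).toReal with hmdef
  have hm_nonneg : 0 ≤ m := ENNReal.toReal_nonneg
  have hρ : q * m < 1 := by
    have h1 : (ENNReal.ofReal q * ∫⁻ ω, ENNReal.ofReal (Y ω ^ (-a)) ∂μ).toReal < (1 : ℝ≥0∞).toReal :=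
      (ENNReal.toReal_lt_toReal (ENNReal.mul_ne_top ENNReal.ofReal_ne_top hfin) (by simp)).2 hmom
    rwa [ENNReal.toReal_mul, ENNReal.toReal_ofReal hq0.le, ENNReal.toReal_one] at h1
  -- integrability of Y ^ (-a)
  have hYa_meas : Measurable fun ω => Y ω ^ (-a) := hY_meas.pow_const (-a)
  have hYa_nonneg : ∀ᵐ ω ∂μ, 0 ≤ Y ω ^ (-a) := by
    filter_upwards [hY_pos] with ω hω using (Real.rpow_pos_of_pos hω _).le
  have hYint : Integrable (fun ω => Y ω ^ (-a)) μ := by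
    refine ⟨hYa_meas.aestronglyMeasurable, ?_⟩
    rw [hasFiniteIntegral_iff_ofReal hYa_nonneg]
    exact lt_of_le_of_ne le_top hfin
  have hYm : ∫ ω, Y ω ^ (-a) ∂μ = m := by
    rw [hmdef, integral_eq_lintegral_of_nonneg_ae hYa_nonneg hYa_meas.aestronglyMeasurable]
  -- the constant
  set K : ℝ := (q * M * m * t₀ ^ a + C) / (1 - q * m) with hKdef
  have hden : 0 < 1 - q * m := by linarith
  have hnum : 0 ≤ q * M * m * t₀ ^ a + C := by positivity
  have hK_nonneg : 0 ≤ K := div_nonneg hnum hden.le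
  have hKeq : q * m * K + (q * M * m * t₀ ^ a + C) = K := by
    have : K * (1 - q * m) = q * M * m * t₀ ^ a + C := div_mul_cancel₀ _ hden.ne'
    nlinarith [this]
  -- the key induction
  have key : ∀ n : ℕ, ∀ t, t₀ < t → φ t ≤ q ^ n * M + K * t ^ (-a) := by
    intro n
    induction n with
    | zero =>
      intro t ht
      have ht0 : 0 < t := lt_of_le_of_lt ht₀ ht
      have : 0 ≤ K * t ^ (-a) := mul_nonneg hK_nonneg (Real.rpow_nonneg ht0.le _)
      have := hφM t ht0.le
      simp only [pow_zero, one_mul]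
      nlinarith [mul_nonneg hK_nonneg (Real.rpow_pos_of_pos ht0 (-a)).le]
    | succ n ih =>
      intro t ht
      have ht0 : 0 < t := lt_of_le_of_lt ht₀ ht
      have hta : 0 < t ^ (-a) := Real.rpow_pos_of_pos ht0 _
      -- pointwise bound
      have hpt : ∀ᵐ ω ∂μ, φ (Y ω * t) ≤ q ^ n * M + (K + M * t₀ ^ a) * t ^ (-a) * Y ω ^ (-a) := by
        filter_upwards [hY_pos] with ω hω
        have hyt : 0 < Y ω * t := mul_pos hω ht0
        have hya : 0 < Y ω ^ (-a) := Real.rpow_pos_of_pos hω _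
        have hsplit : (Y ω * t) ^ (-a) = Y ω ^ (-a) * t ^ (-a) :=
          Real.mul_rpow hω.le ht0.le
        by_cases hcase : t₀ < Y ω * t
        · have hIH := ih (Y ω * t) hcase
          rw [hsplit] at hIH
          have h0 : 0 ≤ M * t₀ ^ a * (t ^ (-a) * Y ω ^ (-a)) := by positivity
          nlinarith [hIH, h0]
        · push_neg at hcase
          have ht₀pos : 0 < t₀ := lt_of_lt_of_le hyt hcase
          have h2 : t₀ ^ (-a) ≤ (Y ω * t) ^ (-a) :=
            Real.rpow_le_rpow_of_nonpos hyt hcase (neg_nonpos.mpr ha.le)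
          have h1 : (1 : ℝ) ≤ t₀ ^ a * ((Y ω * t) ^ (-a)) := by
            have : t₀ ^ a * t₀ ^ (-a) = 1 := by
              rw [← Real.rpow_add ht₀pos]; simp
            calc (1 : ℝ) = t₀ ^ a * t₀ ^ (-a) := this.symm
              _ ≤ t₀ ^ a * (Y ω * t) ^ (-a) := by
                  exact mul_le_mul_of_nonneg_left h2 (Real.rpow_nonneg ht₀ a)
          have hφle := hφM (Y ω * t) hyt.le
          rw [hsplit] at h1
          have hqnM : 0 ≤ q ^ n * M := by positivity
          have hKt : 0 ≤ K * t ^ (-a) * Y ω ^ (-a) := by positivity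
          nlinarith [mul_le_mul_of_nonneg_left h1 hM_nonneg]
      -- integrability of both sides
      have hlhs : Integrable (fun ω => φ (Y ω * t)) μ := by
        refine Integrable.mono' (integrable_const M) ((hφ_meas.comp (hY_meas.mul_const t)).aestronglyMeasurable) ?_
        filter_upwards [hY_pos] with ω hω
        have hyt : 0 < Y ω * t := mul_pos hω ht0
        rw [Real.norm_eq_abs, abs_of_nonneg (hφ_nonneg _ hyt.le)]
        exact hφM _ hyt.le
      have hrhs : Integrable (fun ω => q ^ n * M + (K + M * t₀ ^ a) * t ^ (-a) * Y ω ^ (-a)) μ :=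
        (integrable_const _).add (hYint.const_mul _)
      have hint : ∫ ω, φ (Y ω * t) ∂μ ≤ q ^ n * M + (K + M * t₀ ^ a) * t ^ (-a) * m := by
        calc ∫ ω, φ (Y ω * t) ∂μ
            ≤ ∫ ω, (q ^ n * M + (K + M * t₀ ^ a) * t ^ (-a) * Y ω ^ (-a)) ∂μ :=
              integral_mono_ae hlhs hrhs hpt
          _ = q ^ n * M + (K + M * t₀ ^ a) * t ^ (-a) * m := by
              rw [integral_add (integrable_const _) (hYint.const_mul _), integral_const,
                integral_const_mul, hYm]
              simp
      have hstep := hrec t ht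
      have hmono : q * (q ^ n * M + (K + M * t₀ ^ a) * t ^ (-a) * m) + C * t ^ (-a)
          ≤ q ^ (n + 1) * M + K * t ^ (-a) := by
        have heq : q * (q ^ n * M + (K + M * t₀ ^ a) * t ^ (-a) * m) + C * t ^ (-a)
            = q ^ (n + 1) * M + (q * m * K + (q * M * m * t₀ ^ a + C)) * t ^ (-a) := by ring
        rw [heq, hKeq]
      calc φ t ≤ q * ∫ ω, φ (Y ω * t) ∂μ + C * t ^ (-a) := hstep
        _ ≤ q * (q ^ n * M + (K + M * t₀ ^ a) * t ^ (-a) * m) + C * t ^ (-a) :=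
            add_le_add_left (mul_le_mul_of_nonneg_left hint hq0.le) _
        _ ≤ q ^ (n + 1) * M + K * t ^ (-a) := hmono
  -- conclusion
  refine ⟨K + 1, by positivity, ?_⟩
  filter_upwards [eventually_gt_atTop t₀] with t ht
  have ht0 : 0 < t := lt_of_le_of_lt ht₀ ht
  have hta : 0 < t ^ (-a) := Real.rpow_pos_of_pos ht0 _
  have hlim : Tendsto (fun n : ℕ => q ^ n * M + K * t ^ (-a)) atTop (𝓝 (0 * M + K * t ^ (-a))) :=
    ((tendsto_pow_atTop_nhds_zero_of_lt_one hq0.le hq1).mul_const M).add tendsto_const_nhds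
  have h := ge_of_tendsto' hlim (fun n => key n t ht)
  rw [zero_mul, zero_add] at h
  nlinarith [h, hta]
end
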